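/- Let K be a field and let A ∈ K^{n×n} be invertible. Suppose A = Θ · D^{−1} · R with D diagonal invertible, R upper triangular invertible, and ΘᵗΘ = D; and suppose also A = Θ̃ · D̃^{−1} · R̃ where D̃ ∈ K^{n×n} is diagonal invertible, R̃ ∈ K^{n×n} is upper triangular invertible, and Θ̃ᵗΘ̃ is a diagonal matrix. Then ΘᵗΘ̃ is a diagonal matrix, it is invertible, and R̃ = (ΘᵗΘ̃)^{−1} · D̃ · R. -/

import Mathlib

open Matrix

/-- (Theorem 16 of the paper: uniqueness of the fraction-free QR
decomposition.)  Let `A` be invertible over a field `K` with `A = Θ·D⁻¹·R`,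
`ΘᵀΘ = D` (`D` diagonal invertible, `R` upper triangular invertible), and let
`A = Θ̃·D̃⁻¹·R̃` be another decomposition with `D̃` diagonal invertible, `R̃` upper
triangular invertible and `Θ̃ᵀΘ̃` diagonal.  Then `ΘᵀΘ̃` is diagonal and invertible,
and `R̃ = (ΘᵀΘ̃)⁻¹·D̃·R`. -/
theorem stmt17 {K : Type*} [Field K] {n : ℕ}
    (A Θ R Dm Θ' R' Dm' : Matrix (Fin n) (Fin n) K)
    (hA : IsUnit A.det)
    (hDdiag : ∀ i j : Fin n, i ≠ j → Dm i j = 0) (hDunit : IsUnit Dm.det)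
    (hRtri : ∀ i j : Fin n, j < i → R i j = 0) (hRunit : IsUnit R.det)
    (hdec : A = Θ * Dm⁻¹ * R) (hTh : Θᵀ * Θ = Dm)
    (hDdiag' : ∀ i j : Fin n, i ≠ j → Dm' i j = 0) (hDunit' : IsUnit Dm'.det)
    (hRtri' : ∀ i j : Fin n, j < i → R' i j = 0) (hRunit' : IsUnit R'.det)
    (hdec' : A = Θ' * Dm'⁻¹ * R')
    (hTh' : ∀ i j : Fin n, i ≠ j → (Θ'ᵀ * Θ') i j = 0) :
    (∀ i j : Fin n, i ≠ j → (Θᵀ * Θ') i j = 0) ∧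
    IsUnit (Θᵀ * Θ').det ∧
    R' = (Θᵀ * Θ')⁻¹ * Dm' * R := by
  -- Dm and Dm' as `Matrix.diagonal`
  have hDm : Dm = diagonal (fun i => Dm i i) := by
    ext i j; rcases eq_or_ne i j with rfl | h
    · simp
    · simp [diagonal_apply_ne _ h, hDdiag i j h]
  have hDm' : Dm' = diagonal (fun i => Dm' i i) := by
    ext i j; rcases eq_or_ne i j with rfl | h
    · simp
    · simp [diagonal_apply_ne _ h, hDdiag' i j h]
  have hE : Θ'ᵀ * Θ' = diagonal (fun i => (Θ'ᵀ * Θ') i i) := by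
    ext i j; rcases eq_or_ne i j with rfl | h
    · simp
    · simp [diagonal_apply_ne _ h, hTh' i j h]
  -- invertibility facts
  have hDinv : Dm * Dm⁻¹ = 1 := mul_nonsing_inv _ hDunit
  have hD'inv : Dm'⁻¹ * Dm' = 1 := nonsing_inv_mul _ hDunit'
  have hD'inv2 : Dm' * Dm'⁻¹ = 1 := mul_nonsing_inv _ hDunit'
  have hRinv : R * R⁻¹ = 1 := mul_nonsing_inv _ hRunit
  have hRinv2 : R⁻¹ * R = 1 := nonsing_inv_mul _ hRunit
  have hR'inv : R' * R'⁻¹ = 1 := mul_nonsing_inv _ hRunit'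
  have hR'inv2 : R'⁻¹ * R' = 1 := nonsing_inv_mul _ hRunit'
  -- the two decompositions agree
  have heq : Θ * Dm⁻¹ * R = Θ' * Dm'⁻¹ * R' := by rw [← hdec, ← hdec']
  -- Θ' in terms of Θ
  have hΘ' : Θ' = Θ * Dm⁻¹ * R * R'⁻¹ * Dm' := by
    have : Θ * Dm⁻¹ * R * R'⁻¹ = Θ' * Dm'⁻¹ * (R' * R'⁻¹) := by
      rw [heq, mul_assoc]
    rw [hR'inv, mul_one] at this
    calc Θ' = Θ' * Dm'⁻¹ * Dm' := by rw [mul_assoc, hD'inv, mul_one]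
    _ = Θ * Dm⁻¹ * R * R'⁻¹ * Dm' := by rw [← this]
  have hΘ : Θ = Θ' * Dm'⁻¹ * R' * R⁻¹ * Dm := by
    have : Θ' * Dm'⁻¹ * R' * R⁻¹ = Θ * Dm⁻¹ * (R * R⁻¹) := by
      rw [← heq]; rw [mul_assoc]
    rw [hRinv, mul_one] at this
    calc Θ = Θ * Dm⁻¹ * Dm := by rw [mul_assoc, nonsing_inv_mul _ hDunit, mul_one]
    _ = Θ' * Dm'⁻¹ * R' * R⁻¹ * Dm := by rw [← this]
  -- key identity: ΘᵀΘ' = R R'⁻¹ Dm'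
  set M := Θᵀ * Θ' with hM
  have hM1 : M = R * R'⁻¹ * Dm' := by
    rw [hM, hΘ']
    calc Θᵀ * (Θ * Dm⁻¹ * R * R'⁻¹ * Dm')
        = (Θᵀ * Θ) * Dm⁻¹ * (R * R'⁻¹ * Dm') := by
          simp only [Matrix.mul_assoc]
    _ = R * R'⁻¹ * Dm' := by rw [hTh, hDinv, one_mul]
  have hMT : Mᵀ = (Θ'ᵀ * Θ') * Dm'⁻¹ * R' * R⁻¹ * Dm := by
    rw [hM, transpose_mul, transpose_transpose, hΘ]
    simp only [Matrix.mul_assoc]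
  -- triangularity
  have hRt : BlockTriangular R id := fun i j h => hRtri i j h
  have hR't : BlockTriangular R' id := fun i j h => hRtri' i j h
  have : Invertible R' := R'.invertibleOfIsUnitDet hRunit'
  have hR'it : BlockTriangular R'⁻¹ (id : Fin n → Fin n) :=
    blockTriangular_inv_of_blockTriangular hR't
  have hMtri : BlockTriangular M id := by
    rw [hM1]
    exact ((hRt.mul hR'it).mul (hDm' ▸ blockTriangular_diagonal _))
  have hMTtri : BlockTriangular Mᵀ (id : Fin n → Fin n) := by
    rw [hMT]
    have hRi : Invertible R := R.invertibleOfIsUnitDet hRunit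
    have hRit : BlockTriangular R⁻¹ (id : Fin n → Fin n) :=
      blockTriangular_inv_of_blockTriangular hRt
    have hD'i : Invertible Dm' := Dm'.invertibleOfIsUnitDet hDunit'
    have hD'it : BlockTriangular Dm'⁻¹ (id : Fin n → Fin n) :=
      blockTriangular_inv_of_blockTriangular (hDm' ▸ blockTriangular_diagonal _)
    exact ((((hE ▸ blockTriangular_diagonal _).mul hD'it).mul hR't).mul hRit).mul
      (hDm ▸ blockTriangular_diagonal _)
  -- M is diagonal
  have hMdiag : ∀ i j : Fin n, i ≠ j → M i j = 0 := by
    intro i j hij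
    rcases lt_or_gt_of_ne hij with h | h
    · have h0 : Mᵀ j i = 0 := hMTtri (show id i < id j from h)
      simpa using h0
    · exact hMtri h
  -- M is invertible
  have hMunit : IsUnit M.det := by
    rw [hM1, det_mul, det_mul, det_nonsing_inv]
    exact (hRunit.mul (isUnit_ringInverse.mpr hRunit')).mul hDunit'
  refine ⟨hMdiag, hMunit, ?_⟩
  -- final identity
  have hMd : M = diagonal (fun i => M i i) := by
    ext i j; rcases eq_or_ne i j with rfl | h
    · simp
    · simp [diagonal_apply_ne _ h, hMdiag i j h]
  have hMinv : M⁻¹ * M = 1 := nonsing_inv_mul _ hMunit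
  -- diagonal matrices commute
  have hcomm : M⁻¹ * Dm' = Dm' * M⁻¹ := by
    have hMi : M⁻¹ = diagonal (Ring.inverse fun i => M i i) := by
      rw [hMd, inv_diagonal]; simp
    rw [hMi, hDm', diagonal_mul_diagonal, diagonal_mul_diagonal]
    simp [mul_comm]
  have hMinv' : M⁻¹ = Dm'⁻¹ * (R' * R⁻¹) := by
    rw [hM1, Matrix.mul_inv_rev, Matrix.mul_inv_rev, nonsing_inv_nonsing_inv _ hRunit']
  show R' = M⁻¹ * Dm' * R
  rw [hcomm, hMinv']
  calc R' = Dm' * Dm'⁻¹ * (R' * (R⁻¹ * R)) := by rw [hD'inv2, hRinv2, one_mul, mul_one]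
  _ = Dm' * (Dm'⁻¹ * (R' * R⁻¹)) * R := by simp only [Matrix.mul_assoc]
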